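/- Let t ∈ ℂ with t ≠ 0 and t ≠ 1. The conjugacy class of the diagonal matrix diag(t, 1, 1) in the group Ũ₃(ℂ) is exactly the set of matrices [[t,b,c],[0,1,0],[0,0,1]] with b, c ∈ ℂ arbitrary. -/

import Mathlib

open Matrix

/-- `3 × 3` matrices over `F`. -/
abbrev M3 (F : Type*) := Matrix (Fin 3) (Fin 3) F

/-- Membership in the group `Ũ₃(F)` of upper triangular `3 × 3` matrices
`[[a,b,c],[0,d,e],[0,0,1]]` with `a, d ≠ 0` and `(3,3)`-entry equal to `1`. -/
def inU3 {F : Type*} [Field F] (A : M3 F) : Prop :=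
  A 0 0 ≠ 0 ∧ A 1 1 ≠ 0 ∧ A 2 2 = 1 ∧ A 1 0 = 0 ∧ A 2 0 = 0 ∧ A 2 1 = 0

theorem stmt_15 (t : ℂ) (ht0 : t ≠ 0) (ht1 : t ≠ 1) :
    {B : M3 ℂ | ∃ P Q : M3 ℂ, inU3 P ∧ inU3 Q ∧ P * Q = 1 ∧
        B = P * !![t, 0, 0; 0, 1, 0; 0, 0, 1] * Q} =
      {B : M3 ℂ | ∃ b c : ℂ, B = !![t, b, c; 0, 1, 0; 0, 0, 1]} := by
  have h1 : (1 : ℂ) - t ≠ 0 := sub_ne_zero.2 (Ne.symm ht1)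
  ext B
  simp only [Set.mem_setOf_eq]
  constructor
  · rintro ⟨P, Q, hP, hQ, hPQ, rfl⟩
    obtain ⟨hP00, hP11, hP22, hP10, hP20, hP21⟩ := hP
    obtain ⟨hQ00, hQ11, hQ22, hQ10, hQ20, hQ21⟩ := hQ
    have e00 := congrFun (congrFun hPQ 0) 0
    have e11 := congrFun (congrFun hPQ 1) 1
    have e12 := congrFun (congrFun hPQ 1) 2
    simp [Matrix.mul_apply, Fin.sum_univ_three, hP10, hP20, hP21, hQ10, hQ20, hQ21,
      hP22, hQ22, Matrix.one_apply] at e00 e11 e12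
    refine ⟨(P * !![t, 0, 0; 0, 1, 0; 0, 0, 1] * Q) 0 1,
      (P * !![t, 0, 0; 0, 1, 0; 0, 0, 1] * Q) 0 2, ?_⟩
    ext i j
    fin_cases i <;> fin_cases j <;>
      simp [Matrix.mul_apply, Fin.sum_univ_three, hP10, hP20, hP21, hQ10, hQ20, hQ21,
        hP22, hQ22, Matrix.vecHead, Matrix.vecTail, Function.comp]
    · linear_combination t * e00
    · linear_combination e11
    · linear_combination e12
  · rintro ⟨b, c, rfl⟩
    refine ⟨!![1, b / (1 - t), c / (1 - t); 0, 1, 0; 0, 0, 1],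
      !![1, -(b / (1 - t)), -(c / (1 - t)); 0, 1, 0; 0, 0, 1],
      ⟨by norm_num [Matrix.vecHead, Matrix.vecTail], by norm_num [Matrix.vecHead, Matrix.vecTail], by rfl, by norm_num [Matrix.vecHead, Matrix.vecTail], by rfl, by rfl⟩,
      ⟨by norm_num [Matrix.vecHead, Matrix.vecTail], by norm_num [Matrix.vecHead, Matrix.vecTail], by rfl, by norm_num [Matrix.vecHead, Matrix.vecTail], by rfl, by rfl⟩,
      ?_, ?_⟩
    · ext i j
      fin_cases i <;> fin_cases j <;>
        simp [Matrix.mul_apply, Fin.sum_univ_three, Matrix.one_apply, Matrix.vecHead, Matrix.vecTail, Function.comp]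
    · ext i j
      fin_cases i <;> fin_cases j <;>
        simp [Matrix.mul_apply, Fin.sum_univ_three, Matrix.vecHead, Matrix.vecTail, Function.comp] <;> field_simp <;> ring
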